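/- arXiv:2110.14761 — 2 statements merged into one kernel-verified Lean document; each statement's English description precedes it below -/
import Mathlib

section
/- Let G be a graph (as a simple graph with the path metric) and suppose that for every pair of vertices x, y there is an associated connected subgraph g(x,y) containing x and y. If there exists M > 0 such that (1) whenever d(x,y) ≤ 1 the subgraph g(x,y) has diameter at most M, and (2) for all x,y,z the set g(x,y) is contained in the M-neighborhood of g(x,z) ∪ g(y,z), then G is δ-hyperbolic for a constant δ depending only on M. -/
/-! Auxiliary development for the guessing-geodesics criterion. -/

namespace GGC
open SimpleGraph


lemma cube_lt_two_pow : ∀ t : ℕ, 10 ≤ t → t^3 < 2^t := by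
  intro t ht
  induction t with
  | zero => omega
  | succ n ih =>
    rcases Nat.lt_or_ge n 10 with h | h
    · have hn : n = 9 := by omega
      subst hn; norm_num
    · have h1 := ih (by omega)
      have e1 : 10*n^2 ≤ n^3 := by nlinarith
      have e2 : 3*n + 1 ≤ n^2 := by nlinarith
      have h2 : (n+1)^3 ≤ 2 * n^3 := by nlinarith
      calc (n+1)^3 ≤ 2 * n^3 := h2
        _ < 2 * 2^n := by omega
        _ = 2^(n+1) := by ring

lemma arith_contra (M D t : ℕ) (hM : 1 ≤ M) (hD : 50*M*M + 1 ≤ D)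
    (h1 : D ≤ M*(t+4)) (h2 : 2^t ≤ 4*(D+M)) : False := by
  have ht : 50*M ≤ t + 3 := by nlinarith
  have ht10 : 10 ≤ t := by nlinarith
  have hc := cube_lt_two_pow t ht10
  have h3 : 2^t ≤ 4*M*(t+5) := by nlinarith
  have h8 : 8*M ≤ t^2 := by nlinarith
  have : 4*M*(t+5) ≤ t^3 := by nlinarith
  omega

variable {V : Type} {G : SimpleGraph V}

def IsChain (G : SimpleGraph V) (x y : V) (L : ℕ) (c : ℕ → V) : Prop :=
  c 0 = x ∧ (∀ i, L ≤ i → c i = y) ∧ ∀ i, G.dist (c i) (c (i+1)) ≤ 1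

lemma chain_dist (hG : G.Connected) {x y : V} {L : ℕ} {c : ℕ → V}
    (hc : IsChain G x y L c) : ∀ n i, G.dist (c i) (c (i+n)) ≤ n := by
  intro n
  induction n with
  | zero => intro i; simp
  | succ n ih =>
    intro i
    have h1 := ih i
    have h2 := hc.2.2 (i+n)
    calc G.dist (c i) (c (i+(n+1))) ≤ G.dist (c i) (c (i+n)) + G.dist (c (i+n)) (c (i+n+1)) := by
          have := hG.dist_triangle (u := c i) (v := c (i+n)) (w := c (i+n+1))
          simpa [Nat.add_assoc] using this
      _ ≤ n + 1 := by omega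

lemma adj_dist_le_one {u v : V} (h : G.Adj u v) : G.dist u v ≤ 1 :=
  (SimpleGraph.dist_le (SimpleGraph.Walk.cons h SimpleGraph.Walk.nil)).trans (by simp)

lemma walk_getVert_step {x y : V} (p : G.Walk x y) (i : ℕ) :
    G.dist (p.getVert i) (p.getVert (i+1)) ≤ 1 := by
  rcases Nat.lt_or_ge i p.length with h | h
  · exact adj_dist_le_one (p.adj_getVert_succ h)
  · rw [p.getVert_of_length_le h, p.getVert_of_length_le (by omega)]
    simp [SimpleGraph.dist_self]

def IsGeo (G : SimpleGraph V) (x y : V) (c : ℕ → V) : Prop :=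
  IsChain G x y (G.dist x y) c ∧
    ∀ i j, i ≤ j → j ≤ G.dist x y → G.dist (c i) (c j) = j - i

lemma exists_geo (hG : G.Connected) (x y : V) : ∃ c, IsGeo G x y c := by
  obtain ⟨p, hp⟩ := hG.exists_walk_length_eq_dist x y
  have hch : IsChain G x y (G.dist x y) (fun i => p.getVert i) :=
    ⟨p.getVert_zero, fun i hi => p.getVert_of_length_le (by omega),
      fun i => walk_getVert_step p i⟩
  refine ⟨fun i => p.getVert i, hch, ?_⟩
  intro i j hij hj
  show G.dist (p.getVert i) (p.getVert j) = j - i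
  have hle : G.dist (p.getVert i) (p.getVert j) ≤ j - i := by
    have := chain_dist hG hch (j - i) i
    simpa [Nat.add_sub_cancel' hij] using this
  have t1 : G.dist x (p.getVert i) ≤ i := by
    have := chain_dist hG hch i 0
    simpa [hch.1] using this
  have t2 : G.dist (p.getVert j) y ≤ G.dist x y - j := by
    have h3 := chain_dist hG hch (G.dist x y - j) j
    have h4 : (fun i => p.getVert i) (j + (G.dist x y - j)) = y :=
      hch.2.1 (j + (G.dist x y - j)) (by omega)
    simp only at h3 h4
    rwa [h4] at h3
  have hxy : G.dist x y ≤ i + (G.dist (p.getVert i) (p.getVert j)) + (G.dist x y - j) := by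
    have a1 := hG.dist_triangle (u := x) (v := p.getVert j) (w := y)
    have a2 := hG.dist_triangle (u := x) (v := p.getVert i) (w := p.getVert j)
    omega
  omega

lemma exists_chain_in (s : Set V) (hconn : (G.induce s).Connected)
    {x y : V} (hx : x ∈ s) (hy : y ∈ s) :
    ∃ L c, IsChain G x y L c ∧ ∀ i, c i ∈ s := by
  obtain ⟨q⟩ := hconn ⟨x, hx⟩ ⟨y, hy⟩
  refine ⟨q.length, fun i => (q.getVert i).1, ⟨?_, ?_, ?_⟩, fun i => (q.getVert i).2⟩
  · show (q.getVert 0).1 = x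
    rw [q.getVert_zero]
  · intro i hi
    show (q.getVert i).1 = y
    rw [q.getVert_of_length_le hi]
  · intro i
    show G.dist (q.getVert i).1 (q.getVert (i+1)).1 ≤ 1
    rcases Nat.lt_or_ge i q.length with h | h
    · have h2 := q.adj_getVert_succ h
      have : G.Adj (q.getVert i).1 (q.getVert (i+1)).1 := h2
      exact adj_dist_le_one this
    · rw [q.getVert_of_length_le h, q.getVert_of_length_le (by omega)]
      simp [SimpleGraph.dist_self]


lemma stepA (hG : G.Connected) (M : ℕ) (g : V → V → Set V)
    (hend : ∀ x y : V, x ∈ g x y ∧ y ∈ g x y)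
    (hdiam : ∀ x y : V, G.dist x y ≤ 1 → ∀ a ∈ g x y, ∀ b ∈ g x y, G.dist a b ≤ M)
    (hthin : ∀ x y z : V, ∀ w ∈ g x y, ∃ w' ∈ g x z ∪ g y z, G.dist w w' ≤ M) :
    ∀ k L (x y : V) (c : ℕ → V), IsChain G x y L c → L ≤ 2^k → ∀ w ∈ g x y,
      ∃ i, i ≤ L ∧ G.dist w (c i) ≤ M*(k+1) := by
  intro k
  induction k with
  | zero =>
    intro L x y c hc hL w hw
    have hxy : G.dist x y ≤ 1 := by
      have := chain_dist hG hc L 0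
      rw [hc.1] at this
      rw [← hc.2.1 (0 + L) (by omega)]
      omega
    refine ⟨0, by omega, ?_⟩
    rw [hc.1]
    simpa using hdiam x y hxy w hw x (hend x y).1
  | succ k ih =>
    intro L x y c hc hL w hw
    rcases le_or_gt L (2^k) with hsmall | hbig
    · obtain ⟨i, hi, hd⟩ := ih L x y c hc hsmall w hw
      exact ⟨i, hi, hd.trans (Nat.mul_le_mul_left M (by omega))⟩
    · set s := 2^k with hs
      have hsL : s ≤ L := hbig.le
      set m := c s with hm
      obtain ⟨w', hw', hd⟩ := hthin x y m w hw
      rcases hw' with h1 | h1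
      · -- w' ∈ g x m : first half chain
        have hc1 : IsChain G x m s (fun i => c (min i s)) := by
          refine ⟨?_, ?_, ?_⟩
          · show c (min 0 s) = x; simpa using hc.1
          · intro i hi; show c (min i s) = m; rw [Nat.min_eq_right hi]
          · intro i
            show G.dist (c (min i s)) (c (min (i+1) s)) ≤ 1
            rcases Nat.lt_or_ge i s with h | h
            · rw [Nat.min_eq_left h.le, Nat.min_eq_left (by omega)]
              exact hc.2.2 i
            · rw [Nat.min_eq_right h, Nat.min_eq_right (by omega)]
              simp [SimpleGraph.dist_self]
        obtain ⟨i, hi, hdi⟩ := ih s x m _ hc1 le_rfl w' h1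
        rw [Nat.min_eq_left hi] at hdi
        refine ⟨i, by omega, ?_⟩
        have ht := hG.dist_triangle (u := w) (v := w') (w := c i)
        have hmm : M*(k+1+1) = M*(k+1) + M := by ring
        omega
      · -- w' ∈ g y m : reversed second half chain
        have hc2 : IsChain G y m (L - s) (fun i => c (L - min i (L - s))) := by
          refine ⟨?_, ?_, ?_⟩
          · show c (L - min 0 (L - s)) = y
            simpa using hc.2.1 L le_rfl
          · intro i hi
            show c (L - min i (L - s)) = m
            rw [Nat.min_eq_right hi]
            congr 1
            omega
          · intro i
            show G.dist (c (L - min i (L-s))) (c (L - min (i+1) (L-s))) ≤ 1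
            rcases Nat.lt_or_ge i (L - s) with h | h
            · rw [Nat.min_eq_left h.le, Nat.min_eq_left (by omega)]
              have e : (L - (i+1)) + 1 = L - i := by omega
              rw [SimpleGraph.dist_comm, ← e]
              exact hc.2.2 (L - (i+1))
            · rw [Nat.min_eq_right h, Nat.min_eq_right (by omega)]
              simp [SimpleGraph.dist_self]
        obtain ⟨i, hi, hdi⟩ := ih (L - s) y m _ hc2 (by omega) w' h1
        rw [Nat.min_eq_left hi] at hdi
        refine ⟨L - i, by omega, ?_⟩
        have ht := hG.dist_triangle (u := w) (v := w') (w := c (L - i))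
        have hmm : M*(k+1+1) = M*(k+1) + M := by ring
        omega
set_option maxHeartbeats 1000000 in
lemma L1 (hG : G.Connected) (M : ℕ) (hM : 0 < M) (g : V → V → Set V)
    (hend : ∀ x y : V, x ∈ g x y ∧ y ∈ g x y)
    (hdiam : ∀ x y : V, G.dist x y ≤ 1 → ∀ a ∈ g x y, ∀ b ∈ g x y, G.dist a b ≤ M)
    (hthin : ∀ x y z : V, ∀ w ∈ g x y, ∃ w' ∈ g x z ∪ g y z, G.dist w w' ≤ M) :
    ∀ n (x y : V), G.dist x y ≤ n → ∀ w ∈ g x y, ∀ c, IsGeo G x y c →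
      ∃ i, i ≤ G.dist x y ∧ G.dist w (c i) ≤ 50*M*M := by
  intro n
  induction n using Nat.strong_induction_on with
  | _ n IH =>
  intro x y hn w hw c hc
  by_contra hcon
  push_neg at hcon
  set K := 50*M*M with hK
  clear_value K
  set N := G.dist x y with hN
  have hcN : c N = y := hc.1.2.1 N le_rfl
  have hc0 : c 0 = x := hc.1.1
  have hcon' : ∀ i, K < G.dist w (c i) := by
    intro i
    rcases le_or_gt i N with h | h
    · exact hcon i h
    · rw [hc.1.2.1 i h.le, ← hcN]
      exact hcon N le_rfl
  obtain ⟨j, hjmem, hjmin⟩ := Finset.exists_min_image (Finset.range (N+1))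
    (fun i => G.dist w (c i)) ⟨0, by simp⟩
  rw [Finset.mem_range] at hjmem
  have hjN : j ≤ N := by omega
  set D := G.dist w (c j) with hD
  have hmin : ∀ i, D ≤ G.dist w (c i) := by
    intro i
    rcases le_or_gt i N with h | h
    · exact hjmin i (Finset.mem_range.mpr (by omega))
    · rw [hc.1.2.1 i h.le, ← hcN]
      exact hjmin N (Finset.mem_range.mpr (by omega))
  have hDK : K + 1 ≤ D := hcon' j
  set R := D + K + 2*M + 1 with hR
  clear_value R
  set i₁ := j - R with hi1
  clear_value i₁
  set i₂ := min (j + R) N with hi2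
  have hi2' : i₂ = min (j + R) N := hi2
  clear_value i₂
  have hi1j : i₁ ≤ j := by omega
  have hji2 : j ≤ i₂ := by omega
  have hi2N : i₂ ≤ N := by omega
  -- geodesic index distances
  have hxj : G.dist x (c j) = j := by
    have := hc.2 0 j (by omega) hjN; rw [hc0] at this; omega
  have hjy : G.dist (c j) y = N - j := by
    have := hc.2 j N hjN le_rfl; rw [hcN] at this; omega
  obtain ⟨w₁, hw₁, hdw₁⟩ := hthin x y (c i₂) w hw
  rcases hw₁ with h1 | h1
  · -- w₁ ∈ g x (c i₂) : continue with second application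
    obtain ⟨w₂, hw₂, hdw₂⟩ := hthin x (c i₂) (c i₁) w₁ h1
    rcases hw₂ with h2 | h2
    · -- w₂ ∈ g x (c i₁)
      by_cases hi10 : i₁ = 0
      · have hcx : c i₁ = x := by rw [hi10, hc0]
        have hdx : G.dist x (c i₁) ≤ 1 := by rw [hcx]; simp [SimpleGraph.dist_self]
        have h3 := hdiam x (c i₁) hdx w₂ h2 x (hend x (c i₁)).1
        have t1 := hG.dist_triangle (u := w) (v := w₁) (w := x)
        have t2 := hG.dist_triangle (u := w₁) (v := w₂) (w := x)
        have hc00 := hcon' 0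
        rw [hc0] at hc00
        have hKM : 3*M ≤ K := by rw [hK]; nlinarith
        omega
      · have hi1lt : i₁ < n := by omega
        have hxi1 : G.dist x (c i₁) = i₁ := by
          have := hc.2 0 i₁ (by omega) (by omega); rw [hc0] at this; omega
        obtain ⟨c', hc'⟩ := exists_geo hG x (c i₁)
        obtain ⟨i, hile, hdi⟩ := IH i₁ hi1lt x (c i₁) (by omega) w₂ h2 c' hc'
        set u := c' i with hu
        have hxu : G.dist x u = i := by
          have h5 := hc'.2 0 i (by omega) hile; rw [hc'.1.1] at h5; rw [← hu] at h5; omega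
        have hiI : i ≤ i₁ := by omega
        -- lower bound on dist u (c j)
        have t1 := hG.dist_triangle (u := x) (v := u) (w := c j)
        have t2 := hG.dist_triangle (u := u) (v := w₂) (w := c j)
        have t3 := hG.dist_triangle (u := w₂) (v := w₁) (w := c j)
        have t4 := hG.dist_triangle (u := w₁) (v := w) (w := c j)
        have s1 : G.dist u w₂ = G.dist w₂ u := SimpleGraph.dist_comm ..
        have s2 : G.dist w₂ w₁ = G.dist w₁ w₂ := SimpleGraph.dist_comm ..
        have s3 : G.dist w₁ w = G.dist w w₁ := SimpleGraph.dist_comm ..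
        have s4 : G.dist w (c j) = D := rfl
        have c1 : j ≤ i + G.dist u (c j) := by omega
        have c2 : G.dist u (c j) ≤ K + 2*M + D := by omega
        have c3 : i₁ = j - R := by omega
        have c4 : R ≤ K + 2*M + D := by omega
        omega
    · -- w₂ ∈ g (c i₂) (c i₁) : step A on the middle segment
      set A := 4*(D+M) with hA
      clear_value A
      set k := Nat.size A with hk
      clear_value k
      have hk1 : 1 ≤ k := by
        have : 0 < A := by omega
        rw [hk]
        exact Nat.size_pos.mpr this
      have hAk : A < 2^k := by rw [hk]; exact Nat.lt_size_self A
      have h2t : 2^(k-1) ≤ A := Nat.lt_size.mp (by rw [← hk]; omega)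
      have hlen : i₂ - i₁ ≤ 2^k := by
        have : i₂ - i₁ ≤ 2*R := by omega
        have : 2*R ≤ A := by omega
        omega
      -- middle chain from c i₂ down to c i₁
      have hchain : IsChain G (c i₂) (c i₁) (i₂ - i₁) (fun i => c (i₂ - min i (i₂ - i₁))) := by
        refine ⟨by simp, ?_, ?_⟩
        · intro i hi
          show c (i₂ - min i (i₂ - i₁)) = c i₁
          rw [Nat.min_eq_right hi]
          have e : i₂ - (i₂ - i₁) = i₁ := by omega
          rw [e]
        · intro i
          show G.dist (c (i₂ - min i (i₂-i₁))) (c (i₂ - min (i+1) (i₂-i₁))) ≤ 1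
          rcases Nat.lt_or_ge i (i₂ - i₁) with h | h
          · rw [Nat.min_eq_left h.le, Nat.min_eq_left (by omega)]
            have e : (i₂ - (i+1)) + 1 = i₂ - i := by omega
            rw [SimpleGraph.dist_comm, ← e]
            exact hc.1.2.2 (i₂ - (i+1))
          · rw [Nat.min_eq_right h, Nat.min_eq_right (by omega)]
            simp [SimpleGraph.dist_self]
      obtain ⟨i, hile, hdi⟩ := stepA hG M g hend hdiam hthin k (i₂ - i₁) (c i₂) (c i₁)
        _ hchain hlen w₂ h2
      rw [Nat.min_eq_left hile] at hdi
      -- dist w (c (i₂ - i)) ≥ D by minimality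
      have hlow := hmin (i₂ - i)
      have t1 := hG.dist_triangle (u := w) (v := w₁) (w := c (i₂ - i))
      have t2 := hG.dist_triangle (u := w₁) (v := w₂) (w := c (i₂ - i))
      have hDk : D ≤ M*(k+1) + 2*M := by omega
      have e1 : M*(k+1) + 2*M = M*(k+3) := by ring
      set t := k - 1 with ht
      clear_value t
      have e2 : M*(k+3) = M*(t+4) := by
        rw [show k = t+1 by omega]
      exact arith_contra M D t hM (by omega) (by omega) (by omega)
  · -- w₁ ∈ g y (c i₂)
    by_cases hi2e : i₂ = N
    · have hcy : c i₂ = y := by rw [hi2e, hcN]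
      have hdyy : G.dist y (c i₂) ≤ 1 := by rw [hcy]; simp [SimpleGraph.dist_self]
      have h3 := hdiam y (c i₂) hdyy w₁ h1 y (hend y (c i₂)).1
      have t1 := hG.dist_triangle (u := w) (v := w₁) (w := y)
      have hcontr := hcon' N
      rw [hcN] at hcontr
      have hKM : 2*M ≤ K := by rw [hK]; nlinarith
      omega
    · have hi2lt : i₂ < N := lt_of_le_of_ne hi2N hi2e
      have hi2eq : i₂ = j + R := by omega
      have hi2y : G.dist (c i₂) y = N - i₂ := by
        have := hc.2 i₂ N hi2N le_rfl; rw [hcN] at this; omega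
      obtain ⟨c', hc'⟩ := exists_geo hG y (c i₂)
      have hdyc : G.dist y (c i₂) ≤ N - i₂ := by
        rw [SimpleGraph.dist_comm]; omega
      obtain ⟨i, hile, hdi⟩ := IH (N - i₂) (by omega) y (c i₂) hdyc w₁ h1 c' hc'
      set u := c' i with hu
      have hyu : G.dist y u = i := by
        have h5 := hc'.2 0 i (by omega) hile; rw [hc'.1.1] at h5; rw [← hu] at h5; omega
      have hiI : i ≤ N - i₂ := by
        have : G.dist y (c i₂) ≤ N - i₂ := hdyc
        omega
      have t1 := hG.dist_triangle (u := c j) (v := u) (w := y)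
      have t2 := hG.dist_triangle (u := c j) (v := w) (w := u)
      have t3 := hG.dist_triangle (u := w) (v := w₁) (w := u)
      have s1 : G.dist u y = G.dist y u := SimpleGraph.dist_comm ..
      have s2 : G.dist (c j) w = G.dist w (c j) := SimpleGraph.dist_comm ..
      omega

/-- Points of `g x y` are nearly on geodesics: lower bound for the Gromov product. -/
lemma lowerB (hG : G.Connected) (M : ℕ) (hM : 0 < M) (g : V → V → Set V)
    (hend : ∀ x y : V, x ∈ g x y ∧ y ∈ g x y)
    (hdiam : ∀ x y : V, G.dist x y ≤ 1 → ∀ a ∈ g x y, ∀ b ∈ g x y, G.dist a b ≤ M)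
    (hthin : ∀ x y z : V, ∀ w ∈ g x y, ∃ w' ∈ g x z ∪ g y z, G.dist w w' ≤ M)
    (p x y : V) (w : V) (hw : w ∈ g x y) :
    G.dist p x + G.dist p y ≤ 2*(G.dist p w) + G.dist x y + 2*(50*M*M) := by
  obtain ⟨c, hc⟩ := exists_geo hG x y
  obtain ⟨i, hiN, hdi⟩ := L1 hG M hM g hend hdiam hthin (G.dist x y) x y le_rfl w hw c hc
  obtain ⟨K, hK⟩ : ∃ K, K = 50*M*M := ⟨_, rfl⟩
  rw [← hK] at hdi ⊢
  have hxi : G.dist x (c i) = i := by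
    have h5 := hc.2 0 i (by omega) hiN; rw [hc.1.1] at h5; omega
  have hiy : G.dist (c i) y = G.dist x y - i := by
    have h5 := hc.2 i (G.dist x y) hiN le_rfl
    rw [hc.1.2.1 (G.dist x y) le_rfl] at h5; omega
  have t1 := hG.dist_triangle (u := p) (v := w) (w := x)
  have t2 := hG.dist_triangle (u := w) (v := c i) (w := x)
  have t3 := hG.dist_triangle (u := p) (v := w) (w := y)
  have t4 := hG.dist_triangle (u := w) (v := c i) (w := y)
  have s1 : G.dist (c i) x = G.dist x (c i) := SimpleGraph.dist_comm ..
  have s2 : G.dist w (c i) = G.dist (c i) w := SimpleGraph.dist_comm ..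
  omega

/-- `g x y` passes near the corner: upper bound for the Gromov product. -/
lemma upperB (hG : G.Connected) (M : ℕ) (hM : 0 < M) (g : V → V → Set V)
    (hend : ∀ x y : V, x ∈ g x y ∧ y ∈ g x y)
    (hdiam : ∀ x y : V, G.dist x y ≤ 1 → ∀ a ∈ g x y, ∀ b ∈ g x y, G.dist a b ≤ M)
    (hthin : ∀ x y z : V, ∀ w ∈ g x y, ∃ w' ∈ g x z ∪ g y z, G.dist w w' ≤ M)
    (p x y : V) (hcxy : (G.induce (g x y)).Connected) :
    ∃ w ∈ g x y, 2*(G.dist p w) + G.dist x y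
      ≤ G.dist p x + G.dist p y + 4*(M + 50*M*M) + 2 := by
  classical
  obtain ⟨K, hK⟩ : ∃ K, K = 50*M*M := ⟨_, rfl⟩
  rw [← hK]
  -- the two "near a geodesic side" predicates
  set Px : V → Prop := fun v => ∃ u, G.dist v u ≤ M + K ∧ G.dist p u + G.dist u x = G.dist p x
    with hPx
  set Py : V → Prop := fun v => ∃ u, G.dist v u ≤ M + K ∧ G.dist p u + G.dist u y = G.dist p y
    with hPy
  have hdich : ∀ v ∈ g x y, Px v ∨ Py v := by
    intro v hv
    obtain ⟨w', hw', hdw'⟩ := hthin x y p v hv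
    rcases hw' with h1 | h1
    · left
      obtain ⟨c, hc⟩ := exists_geo hG x p
      obtain ⟨i, hiN, hdi⟩ := L1 hG M hM g hend hdiam hthin (G.dist x p) x p le_rfl w' h1 c hc
      rw [← hK] at hdi
      refine ⟨c i, ?_, ?_⟩
      · have := hG.dist_triangle (u := v) (v := w') (w := c i)
        omega
      · have hxi : G.dist x (c i) = i := by
          have h5 := hc.2 0 i (by omega) hiN; rw [hc.1.1] at h5; omega
        have hip : G.dist (c i) p = G.dist x p - i := by
          have h5 := hc.2 i (G.dist x p) hiN le_rfl
          rw [hc.1.2.1 (G.dist x p) le_rfl] at h5; omega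
        have s1 : G.dist p (c i) = G.dist (c i) p := SimpleGraph.dist_comm ..
        have s2 : G.dist (c i) x = G.dist x (c i) := SimpleGraph.dist_comm ..
        have s3 : G.dist p x = G.dist x p := SimpleGraph.dist_comm ..
        omega
    · right
      obtain ⟨c, hc⟩ := exists_geo hG y p
      obtain ⟨i, hiN, hdi⟩ := L1 hG M hM g hend hdiam hthin (G.dist y p) y p le_rfl w' h1 c hc
      rw [← hK] at hdi
      refine ⟨c i, ?_, ?_⟩
      · have := hG.dist_triangle (u := v) (v := w') (w := c i)
        omega
      · have hxi : G.dist y (c i) = i := by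
          have h5 := hc.2 0 i (by omega) hiN; rw [hc.1.1] at h5; omega
        have hip : G.dist (c i) p = G.dist y p - i := by
          have h5 := hc.2 i (G.dist y p) hiN le_rfl
          rw [hc.1.2.1 (G.dist y p) le_rfl] at h5; omega
        have s1 : G.dist p (c i) = G.dist (c i) p := SimpleGraph.dist_comm ..
        have s2 : G.dist (c i) y = G.dist y (c i) := SimpleGraph.dist_comm ..
        have s3 : G.dist p y = G.dist y p := SimpleGraph.dist_comm ..
        omega
  -- a chain inside g x y from x to y
  obtain ⟨L, c, hcc, hcm⟩ := exists_chain_in (g x y) hcxy (hend x y).1 (hend x y).2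
  -- the last index on the chain which is near the x-side
  set Q : ℕ → Prop := fun i => Px (c i) with hQ
  have hQ0 : Q 0 := by
    rw [hQ, hPx]
    refine ⟨x, ?_, ?_⟩
    · rw [hcc.1]; simp [SimpleGraph.dist_self]
    · simp [SimpleGraph.dist_self]
  set i₀ := Nat.findGreatest Q L with hi₀
  have hQi₀ : Q i₀ := Nat.findGreatest_spec (Nat.zero_le L) hQ0
  have hi₀L : i₀ ≤ L := Nat.findGreatest_le L
  -- produce w with both side approximations
  have main : ∃ w ∈ g x y,
      (∃ u, G.dist w u ≤ M + K ∧ G.dist p u + G.dist u x = G.dist p x) ∧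
      (∃ u', G.dist w u' ≤ M + K + 1 ∧ G.dist p u' + G.dist u' y = G.dist p y) := by
    rcases eq_or_lt_of_le hi₀L with heq | hlt
    · -- the whole chain is near the x side; use w = y
      refine ⟨c L, hcm L, ?_, ?_⟩
      · have := hQi₀; rw [heq] at this; exact this
      · refine ⟨y, ?_, ?_⟩
        · rw [hcc.2.1 L le_rfl]; simp [SimpleGraph.dist_self]
        · simp [SimpleGraph.dist_self]
    · have hnot : ¬ Q (i₀ + 1) := Nat.findGreatest_is_greatest (n := L) (P := Q) (by omega) (by omega)
      have hPyc : Py (c (i₀+1)) := by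
        rcases hdich (c (i₀+1)) (hcm (i₀+1)) with h | h
        · exact absurd h hnot
        · exact h
      obtain ⟨u', hu'1, hu'2⟩ := hPyc
      refine ⟨c i₀, hcm i₀, hQi₀, u', ?_, hu'2⟩
      have t1 := hG.dist_triangle (u := c i₀) (v := c (i₀+1)) (w := u')
      have t2 := hcc.2.2 i₀
      omega
  obtain ⟨w, hwg, ⟨u, hu1, hu2⟩, ⟨u', hu'1, hu'2⟩⟩ := main
  refine ⟨w, hwg, ?_⟩
  have t1 := hG.dist_triangle (u := p) (v := u) (w := w)
  have t2 := hG.dist_triangle (u := p) (v := u') (w := w)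
  have t3 := hG.dist_triangle (u := x) (v := u) (w := w)
  have t4 := hG.dist_triangle (u := x) (v := w) (w := u')
  have t5 := hG.dist_triangle (u := x) (v := u') (w := y)
  have s1 : G.dist u w = G.dist w u := SimpleGraph.dist_comm ..
  have s2 : G.dist u' w = G.dist w u' := SimpleGraph.dist_comm ..
  have s3 : G.dist u x = G.dist x u := SimpleGraph.dist_comm ..
  have s4 : G.dist u' y = G.dist y u' := SimpleGraph.dist_comm ..
  have s5 : G.dist x y ≤ G.dist x u' + G.dist u' y := t5
  omega


end GGC


/-- guessing geodesics, Bowditch / Masur–Schleimer: suppose a connected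
graph `G` comes with connected subgraphs `g x y` containing `x` and `y` such that
(1) `g x y` has diameter at most `M` whenever `d(x,y) ≤ 1`, and
(2) `g x y` lies in the `M`-neighbourhood of `g x z ∪ g y z` for all `x, y, z`.
Then `G` is `δ`-hyperbolic (expressed via the Gromov four-point condition for the
path metric), where `δ` depends only on `M`. -/

theorem guessing_geodesics_criterion (M : ℕ) (hM : 0 < M) :
    ∃ δ : ℝ, 0 ≤ δ ∧
      ∀ (V : Type) (G : SimpleGraph V), G.Connected →
        ∀ g : V → V → Set V,
          (∀ x y : V, x ∈ g x y ∧ y ∈ g x y) →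
          (∀ x y : V, (G.induce (g x y)).Connected) →
          (∀ x y : V, G.dist x y ≤ 1 → ∀ a ∈ g x y, ∀ b ∈ g x y, G.dist a b ≤ M) →
          (∀ x y z : V, ∀ w ∈ g x y, ∃ w' ∈ g x z ∪ g y z, G.dist w w' ≤ M) →
          ∀ a b c d : V,
            (G.dist a b : ℝ) + G.dist c d ≤
              max ((G.dist a c : ℝ) + G.dist b d) ((G.dist a d : ℝ) + G.dist b c)
                + 2 * δ := by
  refine ⟨((150*M*M + 3*M + 1 : ℕ) : ℝ), by positivity, ?_⟩
  intro V G hG g hend hconn hdiam hthin a b c d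
  -- minimizers of the distance from d to the sets g x y
  have exmin : ∀ x y : V, ∃ w ∈ g x y, ∀ v ∈ g x y, G.dist d w ≤ G.dist d v := by
    intro x y
    have hne : {n : ℕ | ∃ v ∈ g x y, G.dist d v = n}.Nonempty :=
      ⟨G.dist d x, x, (hend x y).1, rfl⟩
    obtain ⟨w, hwg, hwd⟩ := Nat.sInf_mem hne
    refine ⟨w, hwg, fun v hv => ?_⟩
    rw [hwd]
    exact Nat.sInf_le ⟨v, hv, rfl⟩
  obtain ⟨wab, hwabg, hwabm⟩ := exmin a b
  obtain ⟨wac, hwacg, hwacm⟩ := exmin a c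
  obtain ⟨wbc, hwbcg, hwbcm⟩ := exmin b c
  obtain ⟨w', hw', hdw'⟩ := hthin a b c wab hwabg
  obtain ⟨w2, hw2g, hub0⟩ := GGC.upperB hG M hM g hend hdiam hthin d a b (hconn a b)
  have hub : 2*(G.dist d wab) + G.dist a b
      ≤ G.dist d a + G.dist d b + 4*(M + 50*M*M) + 2 := by
    have := hwabm w2 hw2g; omega
  have hcast : ∀ A B C D2 : ℕ, A + B ≤ C + D2 + (6*(50*M*M)+6*M+2) →
      (A : ℝ) + B ≤ (C : ℝ) + D2 + 2*((150*M*M + 3*M + 1 : ℕ) : ℝ) := by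
    intro A B C D2 h
    have h2 := (Nat.cast_le (α := ℝ)).mpr h
    push_cast at h2 ⊢
    nlinarith [h2]
  rcases hw' with h1 | h1
  · -- w' ∈ g a c : conclude via the (a c)+(b d) side
    have hlb := GGC.lowerB hG M hM g hend hdiam hthin d a c wac hwacg
    have hmd : G.dist d wac ≤ G.dist d wab + M := by
      have h2 := hwacm w' h1
      have t := hG.dist_triangle (u := d) (v := wab) (w := w')
      omega
    have hn : G.dist a b + G.dist c d ≤ G.dist a c + G.dist b d + (6*(50*M*M)+6*M+2) := by
      obtain ⟨K, hK⟩ : ∃ K, K = 50*M*M := ⟨_, rfl⟩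
      rw [← hK] at hlb hub ⊢
      rw [SimpleGraph.dist_comm (u := c) (v := d), SimpleGraph.dist_comm (u := b) (v := d)]
      omega
    have := hcast _ _ _ _ hn
    calc (G.dist a b : ℝ) + G.dist c d
        ≤ (G.dist a c : ℝ) + G.dist b d + 2*((150*M*M + 3*M + 1 : ℕ) : ℝ) := this
      _ ≤ max ((G.dist a c : ℝ) + G.dist b d) ((G.dist a d : ℝ) + G.dist b c)
            + 2*((150*M*M + 3*M + 1 : ℕ) : ℝ) := by
          have := le_max_left ((G.dist a c : ℝ) + G.dist b d)
            ((G.dist a d : ℝ) + G.dist b c)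
          linarith
  · -- w' ∈ g b c : conclude via the (a d)+(b c) side
    have hlb := GGC.lowerB hG M hM g hend hdiam hthin d b c wbc hwbcg
    have hmd : G.dist d wbc ≤ G.dist d wab + M := by
      have h2 := hwbcm w' h1
      have t := hG.dist_triangle (u := d) (v := wab) (w := w')
      omega
    have hn : G.dist a b + G.dist c d ≤ G.dist a d + G.dist b c + (6*(50*M*M)+6*M+2) := by
      obtain ⟨K, hK⟩ : ∃ K, K = 50*M*M := ⟨_, rfl⟩
      rw [← hK] at hlb hub ⊢
      rw [SimpleGraph.dist_comm (u := c) (v := d), SimpleGraph.dist_comm (u := a) (v := d)]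
      omega
    have := hcast _ _ _ _ hn
    calc (G.dist a b : ℝ) + G.dist c d
        ≤ (G.dist a d : ℝ) + G.dist b c + 2*((150*M*M + 3*M + 1 : ℕ) : ℝ) := this
      _ ≤ max ((G.dist a c : ℝ) + G.dist b d) ((G.dist a d : ℝ) + G.dist b c)
            + 2*((150*M*M + 3*M + 1 : ℕ) : ℝ) := by
          have := le_max_right ((G.dist a c : ℝ) + G.dist b d)
            ((G.dist a d : ℝ) + G.dist b c)
          linarith
end

section
/- Let X be a geodesic metric space. If there exists a quasi-isometric embedding of ℤ² (with the ℓ¹ or sup metric) into X, i.e., a map f : ℤ² → X and constants C ≥ 1, D ≥ 0 with (1/C)·|p − q| − D ≤ d(f(p), f(q)) ≤ C·|p − q| + D for all p, q ∈ ℤ², then X is not δ-hyperbolic for any δ ≥ 0. -/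
/-- A unit-speed geodesic from `x` to `y`, parametrised on `[0, dist x y]`. -/
def IsGeodesicParam {X : Type*} [MetricSpace X] (f : ℝ → X) (x y : X) : Prop :=
  f 0 = x ∧ f (dist x y) = y ∧
    ∀ s ∈ Set.Icc (0 : ℝ) (dist x y), ∀ t ∈ Set.Icc (0 : ℝ) (dist x y),
      dist (f s) (f t) = |s - t|

/-- A geodesic metric space: any two points are joined by a geodesic. -/
def IsGeodesicSpace (X : Type*) [MetricSpace X] : Prop :=
  ∀ x y : X, ∃ f : ℝ → X, IsGeodesicParam f x y

/-- Gromov hyperbolicity via `δ`-thin geodesic triangles: each side of a geodesic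
triangle lies in the `δ`-neighbourhood of the union of the other two sides. -/
def IsDeltaHyperbolic (X : Type*) [MetricSpace X] (δ : ℝ) : Prop :=
  ∀ x y z : X, ∀ f g h : ℝ → X,
    IsGeodesicParam f x y → IsGeodesicParam g y z → IsGeodesicParam h x z →
    ∀ t ∈ Set.Icc (0 : ℝ) (dist x z),
      ∃ s : ℝ, (s ∈ Set.Icc (0 : ℝ) (dist x y) ∧ dist (h t) (f s) ≤ δ) ∨
               (s ∈ Set.Icc (0 : ℝ) (dist y z) ∧ dist (h t) (g s) ≤ δ)

private lemma aux_four_pow (M : ℕ) : ((M : ℝ) + 1) ^ 2 ≤ 4 ^ M := by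
  induction M with
  | zero => norm_num
  | succ k ih =>
    push_cast [pow_succ]
    push_cast at ih
    nlinarith [ih, sq_nonneg ((k : ℝ)), Nat.cast_nonneg (α := ℝ) k]

private lemma aux_growth (a b : ℝ) (ha : 0 ≤ a) (hb : 0 ≤ b) :
    ∃ K : ℕ, a * K + b < 2 ^ K := by
  obtain ⟨M, hM⟩ := exists_nat_gt (a + b)
  refine ⟨2 * M + 2, ?_⟩
  have h4 := aux_four_pow M
  have hpow : (2 : ℝ) ^ (2 * M + 2) = 4 * 4 ^ M := by
    rw [pow_add, pow_mul]; norm_num; ring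
  have hM0 : (0 : ℝ) ≤ M := Nat.cast_nonneg M
  rw [hpow]
  push_cast
  nlinarith [h4, hM, hM0, ha, hb]

private lemma chain_close {X : Type*} [MetricSpace X] (hgeo : IsGeodesicSpace X)
    {δ L : ℝ} (hδ : 0 ≤ δ) (hL : 0 ≤ L) (hhyp : IsDeltaHyperbolic X δ) :
    ∀ (K N : ℕ), N ≤ 2 ^ K → ∀ c : ℕ → X,
      (∀ i, i < N → dist (c i) (c (i + 1)) ≤ L) →
      ∀ h : ℝ → X, IsGeodesicParam h (c 0) (c N) →
      ∀ t ∈ Set.Icc (0 : ℝ) (dist (c 0) (c N)),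
      ∃ i, i ≤ N ∧ dist (h t) (c i) ≤ δ * K + L := by
  intro K
  induction K with
  | zero =>
    intro N hN c hc h hh t ht
    rw [pow_zero] at hN
    obtain ⟨hh0, hh1, hhd⟩ := hh
    interval_cases N
    · refine ⟨0, le_refl _, ?_⟩
      have ht0 : t = 0 := le_antisymm (by simpa using ht.2) ht.1
      have hz : dist (h t) (c 0) = 0 := by rw [ht0, hh0, dist_self]
      rw [hz]
      simp [hL]
    · refine ⟨0, by omega, ?_⟩
      have key : dist (h t) (c 0) = t := by
        rw [← hh0, hhd t ht 0 ⟨le_refl _, dist_nonneg⟩, sub_zero, abs_of_nonneg ht.1]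
      have h01 := hc 0 (by omega)
      rw [key]
      have := ht.2
      simp only [Nat.cast_zero, mul_zero, zero_add]
      linarith
  | succ k ih =>
    intro N hN c hc h hh t ht
    by_cases hsmall : N ≤ 2 ^ k
    · obtain ⟨i, hi, hd⟩ := ih N hsmall c hc h hh t ht
      refine ⟨i, hi, le_trans hd ?_⟩
      push_cast
      nlinarith [hδ]
    · have hm : 2 ^ k ≤ N := (not_le.mp hsmall).le
      have hNm : N - 2 ^ k ≤ 2 ^ k := by
        have hps : (2 : ℕ) ^ (k + 1) = 2 ^ k + 2 ^ k := by rw [pow_succ]; ring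
        omega
      obtain ⟨F, hF⟩ := hgeo (c 0) (c (2 ^ k))
      obtain ⟨G, hG⟩ := hgeo (c (2 ^ k)) (c N)
      obtain ⟨s, hs⟩ := hhyp (c 0) (c (2 ^ k)) (c N) F G h hF hG hh t ht
      rcases hs with ⟨hsI, hsd⟩ | ⟨hsI, hsd⟩
      · obtain ⟨i, hi, hd⟩ :=
          ih (2 ^ k) le_rfl c (fun i hi => hc i (lt_of_lt_of_le hi hm)) F hF s hsI
        refine ⟨i, le_trans hi hm, ?_⟩
        have htri := dist_triangle (h t) (F s) (c i)
        push_cast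
        push_cast at hd
        linarith
      · set c' : ℕ → X := fun i => c (2 ^ k + i) with hc'
        have e1 : c' (N - 2 ^ k) = c N := by
          simp only [hc']; congr 1; omega
        have hG' : IsGeodesicParam G (c' 0) (c' (N - 2 ^ k)) := by
          rw [e1]; exact hG
        have hsI' : s ∈ Set.Icc (0 : ℝ) (dist (c' 0) (c' (N - 2 ^ k))) := by
          rw [e1]; exact hsI
        obtain ⟨i, hi, hd⟩ := ih (N - 2 ^ k) hNm c'
          (fun i hi => by
            have := hc (2 ^ k + i) (by omega)
            simpa [hc', Nat.add_assoc] using this) G hG' s hsI'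
        refine ⟨2 ^ k + i, by omega, ?_⟩
        have htri := dist_triangle (h t) (G s) (c' i)
        have hfin : dist (h t) (c' i) ≤ δ + (δ * k + L) := by linarith
        simp only [hc'] at hfin
        push_cast
        linarith

private lemma geodesic_mid {X : Type*} [MetricSpace X] {h : ℝ → X} {x y : X}
    (hh : IsGeodesicParam h x y) :
    dist (h (dist x y / 2)) x = dist x y / 2 ∧
    dist (h (dist x y / 2)) y = dist x y / 2 := by
  obtain ⟨h0, h1, hd⟩ := hh
  have d0 : (0 : ℝ) ≤ dist x y := dist_nonneg
  have hm : dist x y / 2 ∈ Set.Icc (0 : ℝ) (dist x y) := ⟨by linarith, by linarith⟩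
  constructor
  · have e := hd _ hm 0 ⟨le_refl _, d0⟩
    rw [h0, sub_zero, abs_of_nonneg (by linarith)] at e
    exact e
  · have e := hd _ hm (dist x y) ⟨d0, le_refl _⟩
    rw [h1, abs_of_nonpos (by linarith)] at e
    rw [e]; ring

set_option maxHeartbeats 1000000 in
/-- a geodesic metric space admitting a quasi-isometric embedding of
`ℤ²` (with the `ℓ¹` metric) is not `δ`-hyperbolic for any `δ ≥ 0`. -/
theorem no_hyperbolicity_with_quasiflat
    {X : Type*} [MetricSpace X] (hgeo : IsGeodesicSpace X)
    (f : ℤ × ℤ → X) (C D : ℝ) (hC : 1 ≤ C) (hD : 0 ≤ D)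
    (hqi : ∀ p q : ℤ × ℤ,
      (1 / C) * ((|p.1 - q.1| : ℝ) + (|p.2 - q.2| : ℝ)) - D ≤ dist (f p) (f q) ∧
      dist (f p) (f q) ≤ C * ((|p.1 - q.1| : ℝ) + (|p.2 - q.2| : ℝ)) + D) :
    ∀ δ : ℝ, 0 ≤ δ → ¬ IsDeltaHyperbolic X δ := by
  intro δ hδ0 hhyp
  have hC0 : (0 : ℝ) < C := lt_of_lt_of_le one_pos hC
  have hL0 : (0 : ℝ) ≤ 2 * C + D := by linarith
  obtain ⟨K, hK⟩ := aux_growth (δ * C * (1 + 4 * C ^ 2))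
      (C * (3 * D / 2 + δ + (2 * C + D)) + 2 * C ^ 3 * (2 * δ + 2 * (2 * C + D) + D))
      (by positivity) (by positivity)
  obtain ⟨n, hn⟩ : ∃ n : ℕ, n = 2 ^ K := ⟨2 ^ K, rfl⟩
  obtain ⟨h, hh⟩ := hgeo (f ((0 : ℤ), (0 : ℤ))) (f (2 * (n : ℤ), (0 : ℤ)))
  set d : ℝ := dist (f ((0 : ℤ), (0 : ℤ))) (f (2 * (n : ℤ), (0 : ℤ))) with hd
  have hd0 : (0 : ℝ) ≤ d := dist_nonneg
  have ht2 : d / 2 ∈ Set.Icc (0 : ℝ) d := ⟨by linarith, by linarith⟩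
  obtain ⟨hmA, hmB⟩ := geodesic_mid hh
  rw [← hd] at hmA hmB
  -- lower bound on d
  have hdlow : (1 / C) * (2 * (n : ℝ)) - D ≤ d := by
    have h1 := (hqi (0, 0) (2 * (n : ℤ), 0)).1
    push_cast at h1
    rw [zero_sub, abs_neg, abs_of_nonneg (by positivity : (0 : ℝ) ≤ 2 * (n : ℝ))] at h1
    simp only [sub_self, abs_zero, add_zero] at h1
    exact h1
  -- bottom chain: a point f(k,0) close to the midpoint of the geodesic h
  have hbot : ∃ k : ℕ, k ≤ 2 * n ∧
      dist (h (d / 2)) (f ((k : ℤ), 0)) ≤ δ * (K + 1) + (2 * C + D) := by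
    have hsteps : ∀ i, i < 2 * n →
        dist ((fun i : ℕ => f ((i : ℤ), 0)) i) ((fun i : ℕ => f ((i : ℤ), 0)) (i + 1))
          ≤ 2 * C + D := by
      intro i _
      have hb := (hqi ((i : ℤ), 0) ((i : ℤ) + 1, 0)).2
      push_cast at hb ⊢
      norm_num at hb
      linarith
    have e0 : (fun i : ℕ => f ((i : ℤ), 0)) 0 = f ((0 : ℤ), (0 : ℤ)) := by norm_num
    have eN : (fun i : ℕ => f ((i : ℤ), 0)) (2 * n) = f (2 * (n : ℤ), (0 : ℤ)) := by
      norm_num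
    have hh' : IsGeodesicParam h ((fun i : ℕ => f ((i : ℤ), 0)) 0)
        ((fun i : ℕ => f ((i : ℤ), 0)) (2 * n)) := by rw [e0, eN]; exact hh
    have hmem : d / 2 ∈ Set.Icc (0 : ℝ)
        (dist ((fun i : ℕ => f ((i : ℤ), 0)) 0) ((fun i : ℕ => f ((i : ℤ), 0)) (2 * n))) := by
      rw [e0, eN]; exact ht2
    obtain ⟨k, hk, hkd⟩ := chain_close hgeo hδ0 hL0 hhyp (K + 1) (2 * n)
      (by rw [hn, pow_succ]; ring_nf; exact le_refl _)
      (fun i : ℕ => f ((i : ℤ), 0)) hsteps h hh' (d / 2) hmem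
    refine ⟨k, hk, ?_⟩
    push_cast at hkd ⊢
    exact hkd
  obtain ⟨k, hk2n, hkd⟩ := hbot
  -- the big triangle
  obtain ⟨F, hF⟩ := hgeo (f ((0 : ℤ), (0 : ℤ))) (f ((n : ℤ), (n : ℤ)))
  obtain ⟨G, hG⟩ := hgeo (f ((n : ℤ), (n : ℤ))) (f (2 * (n : ℤ), (0 : ℤ)))
  obtain ⟨s, hs⟩ := hhyp (f ((0 : ℤ), (0 : ℤ))) (f ((n : ℤ), (n : ℤ)))
    (f (2 * (n : ℤ), (0 : ℤ))) F G h hF hG hh (d / 2) ht2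
  have hcontra : ∃ jr : ℝ, 0 ≤ jr ∧
      (jr ≤ (2 * δ * K + 2 * δ + 2 * (2 * C + D) + D) * C) ∧
      ((n : ℝ) ≤ (3 * D / 2 + δ + δ * K + (2 * C + D) + 2 * C * jr) * C) := by
    rcases hs with ⟨hsI, hsd⟩ | ⟨hsI, hsd⟩
    · -- close to left side [A,T]; chain f(i,i)
      have hsteps : ∀ i, i < n →
          dist ((fun i : ℕ => f ((i : ℤ), (i : ℤ))) i)
            ((fun i : ℕ => f ((i : ℤ), (i : ℤ))) (i + 1)) ≤ 2 * C + D := by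
        intro i _
        have hb := (hqi ((i : ℤ), (i : ℤ)) ((i : ℤ) + 1, (i : ℤ) + 1)).2
        push_cast at hb ⊢
        norm_num at hb
        linarith
      have e0 : (fun i : ℕ => f ((i : ℤ), (i : ℤ))) 0 = f ((0 : ℤ), (0 : ℤ)) := by norm_num
      have eN : (fun i : ℕ => f ((i : ℤ), (i : ℤ))) n = f ((n : ℤ), (n : ℤ)) := rfl
      have hF' : IsGeodesicParam F ((fun i : ℕ => f ((i : ℤ), (i : ℤ))) 0)
          ((fun i : ℕ => f ((i : ℤ), (i : ℤ))) n) := by rw [e0, eN]; exact hF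
      have hsI' : s ∈ Set.Icc (0 : ℝ)
          (dist ((fun i : ℕ => f ((i : ℤ), (i : ℤ))) 0)
            ((fun i : ℕ => f ((i : ℤ), (i : ℤ))) n)) := by rw [e0, eN]; exact hsI
      obtain ⟨j, hjn, hjd⟩ := chain_close hgeo hδ0 hL0 hhyp K n (le_of_eq hn)
        (fun i : ℕ => f ((i : ℤ), (i : ℤ))) hsteps F hF' s hsI'
      -- lower bound on dist(f(k,0), f(j,j))
      have q2 : (1 / C) * (j : ℝ) - D ≤ dist (f ((k : ℤ), 0)) (f ((j : ℤ), (j : ℤ))) := by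
        have hb := (hqi ((k : ℤ), 0) ((j : ℤ), (j : ℤ))).1
        push_cast at hb
        rw [zero_sub, abs_neg, abs_of_nonneg (by positivity : (0 : ℝ) ≤ (j : ℝ))] at hb
        have hnn : (0 : ℝ) ≤ 1 / C * |(k : ℝ) - (j : ℝ)| := by positivity
        nlinarith [hb, hnn]
      -- upper bound on dist(A, f(j,j))
      have q1 : dist (f ((0 : ℤ), (0 : ℤ))) (f ((j : ℤ), (j : ℤ)))
          ≤ C * ((j : ℝ) + (j : ℝ)) + D := by
        have hb := (hqi ((0 : ℤ), (0 : ℤ)) ((j : ℤ), (j : ℤ))).2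
        push_cast at hb
        rw [zero_sub, abs_neg, abs_of_nonneg (by positivity : (0 : ℝ) ≤ (j : ℝ))] at hb
        exact hb
      refine ⟨(j : ℝ), Nat.cast_nonneg j, ?_, ?_⟩
      · have t1 := dist_triangle (f ((k : ℤ), 0)) (h (d / 2)) (f ((j : ℤ), (j : ℤ)))
        have t2 := dist_triangle (h (d / 2)) (F s) (f ((j : ℤ), (j : ℤ)))
        have hc1 : dist (f ((k : ℤ), 0)) (h (d / 2)) = dist (h (d / 2)) (f ((k : ℤ), 0)) :=
          dist_comm _ _
        have key : (1 / C) * (j : ℝ) ≤ 2 * δ * K + 2 * δ + 2 * (2 * C + D) + D := by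
          push_cast at hkd hjd ⊢
          linarith [q2, t1, t2, hc1, hkd, hjd, hsd]
        rw [one_div_mul_eq_div, div_le_iff₀ hC0] at key
        exact key
      · have t1 := dist_triangle (h (d / 2)) (F s) (f ((0 : ℤ), (0 : ℤ)))
        have t2 := dist_triangle (F s) (f ((j : ℤ), (j : ℤ))) (f ((0 : ℤ), (0 : ℤ)))
        have hc1 : dist (f ((j : ℤ), (j : ℤ))) (f ((0 : ℤ), (0 : ℤ)))
            = dist (f ((0 : ℤ), (0 : ℤ))) (f ((j : ℤ), (j : ℤ))) := dist_comm _ _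
        have key : (1 / C) * (n : ℝ) ≤ 3 * D / 2 + δ + δ * K + (2 * C + D)
            + 2 * C * (j : ℝ) := by
          push_cast at hjd ⊢
          nlinarith [hdlow, hmA, t1, t2, hc1, hjd, hsd, q1]
        rw [one_div_mul_eq_div, div_le_iff₀ hC0] at key
        exact key
    · -- close to right side [T,B]; chain f(n+i, n-i)
      have hsteps : ∀ i, i < n →
          dist ((fun i : ℕ => f ((n : ℤ) + (i : ℤ), (n : ℤ) - (i : ℤ))) i)
            ((fun i : ℕ => f ((n : ℤ) + (i : ℤ), (n : ℤ) - (i : ℤ))) (i + 1))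
            ≤ 2 * C + D := by
        intro i _
        have hb := (hqi ((n : ℤ) + (i : ℤ), (n : ℤ) - (i : ℤ))
          ((n : ℤ) + ((i : ℤ) + 1), (n : ℤ) - ((i : ℤ) + 1))).2
        push_cast at hb ⊢
        have e1 : |(n : ℝ) + (i : ℝ) - ((n : ℝ) + ((i : ℝ) + 1))| = 1 := by
          rw [show (n : ℝ) + (i : ℝ) - ((n : ℝ) + ((i : ℝ) + 1)) = -1 by ring]; norm_num
        have e2 : |(n : ℝ) - (i : ℝ) - ((n : ℝ) - ((i : ℝ) + 1))| = 1 := by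
          rw [show (n : ℝ) - (i : ℝ) - ((n : ℝ) - ((i : ℝ) + 1)) = 1 by ring]; norm_num
        rw [e1, e2] at hb
        linarith [hb]
      have e0 : (fun i : ℕ => f ((n : ℤ) + (i : ℤ), (n : ℤ) - (i : ℤ))) 0
          = f ((n : ℤ), (n : ℤ)) := by norm_num
      have eN : (fun i : ℕ => f ((n : ℤ) + (i : ℤ), (n : ℤ) - (i : ℤ))) n
          = f (2 * (n : ℤ), (0 : ℤ)) := by
        simp only
        have : ((n : ℤ) + (n : ℤ), (n : ℤ) - (n : ℤ)) = (2 * (n : ℤ), (0 : ℤ)) := by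
          simp only [Prod.mk.injEq]; constructor <;> ring
        rw [this]
      have hG' : IsGeodesicParam G
          ((fun i : ℕ => f ((n : ℤ) + (i : ℤ), (n : ℤ) - (i : ℤ))) 0)
          ((fun i : ℕ => f ((n : ℤ) + (i : ℤ), (n : ℤ) - (i : ℤ))) n) := by
        rw [e0, eN]; exact hG
      have hsI' : s ∈ Set.Icc (0 : ℝ)
          (dist ((fun i : ℕ => f ((n : ℤ) + (i : ℤ), (n : ℤ) - (i : ℤ))) 0)
            ((fun i : ℕ => f ((n : ℤ) + (i : ℤ), (n : ℤ) - (i : ℤ))) n)) := by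
        rw [e0, eN]; exact hsI
      obtain ⟨j, hjn, hjd⟩ := chain_close hgeo hδ0 hL0 hhyp K n (le_of_eq hn)
        (fun i : ℕ => f ((n : ℤ) + (i : ℤ), (n : ℤ) - (i : ℤ))) hsteps G hG' s hsI'
      have hjn' : (j : ℝ) ≤ (n : ℝ) := by exact_mod_cast hjn
      have hnj0 : (0 : ℝ) ≤ (n : ℝ) - (j : ℝ) := by linarith
      have q2 : (1 / C) * ((n : ℝ) - (j : ℝ)) - D ≤
          dist (f ((k : ℤ), 0)) (f ((n : ℤ) + (j : ℤ), (n : ℤ) - (j : ℤ))) := by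
        have hb := (hqi ((k : ℤ), 0) ((n : ℤ) + (j : ℤ), (n : ℤ) - (j : ℤ))).1
        push_cast at hb
        rw [zero_sub, abs_neg, abs_of_nonneg hnj0] at hb
        have hnn : (0 : ℝ) ≤ 1 / C * |(k : ℝ) - ((n : ℝ) + (j : ℝ))| := by positivity
        nlinarith [hb, hnn]
      have q1 : dist (f (2 * (n : ℤ), (0 : ℤ))) (f ((n : ℤ) + (j : ℤ), (n : ℤ) - (j : ℤ)))
          ≤ C * (((n : ℝ) - (j : ℝ)) + ((n : ℝ) - (j : ℝ))) + D := by
        have hb := (hqi (2 * (n : ℤ), 0) ((n : ℤ) + (j : ℤ), (n : ℤ) - (j : ℤ))).2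
        push_cast at hb
        have e1 : |2 * (n : ℝ) - ((n : ℝ) + (j : ℝ))| = (n : ℝ) - (j : ℝ) := by
          rw [show 2 * (n : ℝ) - ((n : ℝ) + (j : ℝ)) = (n : ℝ) - (j : ℝ) by ring,
            abs_of_nonneg hnj0]
        rw [e1, zero_sub, abs_neg, abs_of_nonneg hnj0] at hb
        exact hb
      refine ⟨(n : ℝ) - (j : ℝ), hnj0, ?_, ?_⟩
      · have t1 := dist_triangle (f ((k : ℤ), 0)) (h (d / 2))
          (f ((n : ℤ) + (j : ℤ), (n : ℤ) - (j : ℤ)))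
        have t2 := dist_triangle (h (d / 2)) (G s)
          (f ((n : ℤ) + (j : ℤ), (n : ℤ) - (j : ℤ)))
        have hc1 : dist (f ((k : ℤ), 0)) (h (d / 2)) = dist (h (d / 2)) (f ((k : ℤ), 0)) :=
          dist_comm _ _
        have key : (1 / C) * ((n : ℝ) - (j : ℝ))
            ≤ 2 * δ * K + 2 * δ + 2 * (2 * C + D) + D := by
          push_cast at hkd hjd ⊢
          linarith [q2, t1, t2, hc1, hkd, hjd, hsd]
        rw [one_div_mul_eq_div, div_le_iff₀ hC0] at key
        exact key
      · have t1 := dist_triangle (h (d / 2)) (G s) (f (2 * (n : ℤ), (0 : ℤ)))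
        have t2 := dist_triangle (G s) (f ((n : ℤ) + (j : ℤ), (n : ℤ) - (j : ℤ)))
          (f (2 * (n : ℤ), (0 : ℤ)))
        have hc1 : dist (f ((n : ℤ) + (j : ℤ), (n : ℤ) - (j : ℤ))) (f (2 * (n : ℤ), (0 : ℤ)))
            = dist (f (2 * (n : ℤ), (0 : ℤ))) (f ((n : ℤ) + (j : ℤ), (n : ℤ) - (j : ℤ))) :=
          dist_comm _ _
        have key : (1 / C) * (n : ℝ) ≤ 3 * D / 2 + δ + δ * K + (2 * C + D)
            + 2 * C * ((n : ℝ) - (j : ℝ)) := by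
          push_cast at hjd ⊢
          nlinarith [hdlow, hmB, t1, t2, hc1, hjd, hsd, q1]
        rw [one_div_mul_eq_div, div_le_iff₀ hC0] at key
        exact key
  obtain ⟨jr, hj0, hjup, hnup⟩ := hcontra
  have hnr : ((n : ℕ) : ℝ) = (2 : ℝ) ^ K := by rw [hn]; push_cast; ring
  have hmul := mul_le_mul_of_nonneg_left hjup (by positivity : (0 : ℝ) ≤ 2 * C ^ 2)
  nlinarith [hK, hnup, hmul, hnr]
end
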